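/- Let k ≥ 1, let Σ and C be symmetric positive definite real k×k matrices, let ψ be an invertible real k×k matrix, and let g, w ∈ ℝ^k. For λ > 0 define u(λ) = (λ/(1+λ))·ψ⁻¹g + (1/(1+λ))·w and Λ(λ) = (λ/(1+λ))·ψ⁻¹ Σ (ψ⁻¹)ᵀ + (1/(1+λ))·C. Then, as λ → ∞, det(Λ(λ))^{-1/2} · exp(−(1/2)·u(λ)ᵀ Λ(λ)⁻¹ u(λ)) converges to |det ψ| · (det Σ)^{-1/2} · exp(−(1/2)·gᵀ Σ⁻¹ g). -/

import Mathlib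

open Matrix Filter

/-- Equation (8) of Andrews–Mikusheva: the proportional-prior integrated likelihood
converges, as `λ → ∞`, to the continuously-updating quasi-likelihood
`|det ψ|·(det Σ)^{-1/2}·exp(−½ gᵀΣ⁻¹g)`. -/
theorem stmt_5 (k : ℕ) (hk : 1 ≤ k)
    (Sg C : Matrix (Fin k) (Fin k) ℝ) (hSg : Sg.PosDef) (hC : C.PosDef)
    (ψ : Matrix (Fin k) (Fin k) ℝ) (hψ : IsUnit ψ.det)
    (g w : Fin k → ℝ)
    (u : ℝ → Fin k → ℝ) (Λ : ℝ → Matrix (Fin k) (Fin k) ℝ)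
    (hu : ∀ l, u l = (l / (1 + l)) • ψ⁻¹.mulVec g + (1 / (1 + l)) • w)
    (hΛ : ∀ l, Λ l = (l / (1 + l)) • (ψ⁻¹ * Sg * ψ⁻¹ᵀ) + (1 / (1 + l)) • C) :
    Tendsto (fun l : ℝ =>
        (Λ l).det ^ (-(1 / 2) : ℝ) *
          Real.exp (-(1 / 2) * (u l ⬝ᵥ (Λ l)⁻¹.mulVec (u l))))
      atTop
      (nhds (|ψ.det| * Sg.det ^ (-(1 / 2) : ℝ) *
        Real.exp (-(1 / 2) * (g ⬝ᵥ Sg⁻¹.mulVec g)))) := by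
  set A : Matrix (Fin k) (Fin k) ℝ := ψ⁻¹ * Sg * ψ⁻¹ᵀ with hA
  set v : Fin k → ℝ := ψ⁻¹.mulVec g with hv
  have hdψ : ψ.det ≠ 0 := hψ.ne_zero
  have hdetinv : ψ⁻¹.det = ψ.det⁻¹ := by
    rw [Matrix.det_nonsing_inv, Ring.inverse_eq_inv']
  have hdetA : A.det = ψ.det⁻¹ * Sg.det * ψ.det⁻¹ := by
    rw [hA, Matrix.det_mul, Matrix.det_mul, Matrix.det_transpose, hdetinv]
  have hSd : 0 < Sg.det := hSg.det_pos
  have hdinvne : ψ.det⁻¹ ≠ 0 := inv_ne_zero hdψ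
  have hdetApos : 0 < A.det := by
    have heq : ψ.det⁻¹ * Sg.det * ψ.det⁻¹ = Sg.det * (ψ.det⁻¹) ^ 2 := by ring
    rw [hdetA, heq]
    positivity
  have hdetAne : A.det ≠ 0 := ne_of_gt hdetApos
  -- limits of scalar coefficients
  have h0 : Tendsto (fun l : ℝ => 1 / (1 + l)) atTop (nhds 0) := by
    simpa [Pi.inv_def] using (tendsto_atTop_add_const_left atTop (1 : ℝ) tendsto_id).inv_tendsto_atTop
  have h1 : Tendsto (fun l : ℝ => l / (1 + l)) atTop (nhds 1) := by
    have : Tendsto (fun l : ℝ => 1 - 1 / (1 + l)) atTop (nhds 1) := by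
      simpa using (tendsto_const_nhds (x := (1:ℝ))).sub h0
    refine this.congr' ?_
    filter_upwards [eventually_gt_atTop (0 : ℝ)] with l hl
    have h1l : (1 : ℝ) + l ≠ 0 := by positivity
    field_simp
    ring
  -- convergence of Λ and u
  have TΛ : Tendsto Λ atTop (nhds A) := by
    have h : Tendsto (fun l : ℝ => (l / (1 + l)) • A + (1 / (1 + l)) • C) atTop
        (nhds ((1 : ℝ) • A + (0 : ℝ) • C)) :=
      ((h1.smul_const A).add (h0.smul_const C))
    rw [one_smul, zero_smul, add_zero] at h
    have hfe : Λ = fun l : ℝ => (l / (1 + l)) • A + (1 / (1 + l)) • C := funext hΛ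
    rw [hfe]; exact h
  have Tu : Tendsto u atTop (nhds v) := by
    have h : Tendsto (fun l : ℝ => (l / (1 + l)) • v + (1 / (1 + l)) • w) atTop
        (nhds ((1 : ℝ) • v + (0 : ℝ) • w)) :=
      ((h1.smul_const v).add (h0.smul_const w))
    rw [one_smul, zero_smul, add_zero] at h
    have hfe : u = fun l : ℝ => (l / (1 + l)) • v + (1 / (1 + l)) • w := funext hu
    rw [hfe]; exact h
  have TP : Tendsto (fun l => (Λ l, u l)) atTop (nhds (A, v)) := TΛ.prodMk_nhds Tu
  -- continuity of the functional at (A, v)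
  have hinv : ContinuousAt (fun p : Matrix (Fin k) (Fin k) ℝ × (Fin k → ℝ) => (p.1)⁻¹) (A, v) := by
    have : (fun p : Matrix (Fin k) (Fin k) ℝ × (Fin k → ℝ) => (p.1)⁻¹)
        = fun p => (p.1.det)⁻¹ • p.1.adjugate := by
      funext p; rw [Matrix.inv_def, Ring.inverse_eq_inv']
    rw [this]
    exact ((continuous_fst.matrix_det).continuousAt.inv₀ hdetAne).smul
      (continuous_fst.matrix_adjugate).continuousAt
  have hquad : ContinuousAt
      (fun p : Matrix (Fin k) (Fin k) ℝ × (Fin k → ℝ) => p.2 ⬝ᵥ (p.1)⁻¹.mulVec p.2) (A, v) := by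
    have houter : Continuous
        (fun q : (Fin k → ℝ) × (Matrix (Fin k) (Fin k) ℝ × (Fin k → ℝ)) =>
          q.1 ⬝ᵥ q.2.1.mulVec q.2.2) :=
      continuous_fst.dotProduct
        ((continuous_snd.fst).matrix_mulVec (continuous_snd.snd))
    exact houter.continuousAt.comp (continuousAt_snd.prodMk (hinv.prodMk continuousAt_snd))
  have hΦ : ContinuousAt
      (fun p : Matrix (Fin k) (Fin k) ℝ × (Fin k → ℝ) =>
        p.1.det ^ (-(1 / 2) : ℝ) * Real.exp (-(1 / 2) * (p.2 ⬝ᵥ (p.1)⁻¹.mulVec p.2))) (A, v) := by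
    refine ContinuousAt.mul ?_ ?_
    · exact (continuous_fst.matrix_det).continuousAt.rpow_const (Or.inl hdetAne)
    · exact (Real.continuous_exp.continuousAt).comp ((continuousAt_const.mul hquad))
  have Tmain := hΦ.tendsto.comp TP
  -- identify the limit value
  have hAinv : A⁻¹ = ψᵀ * Sg⁻¹ * ψ := by
    rw [hA, Matrix.mul_inv_rev, Matrix.mul_inv_rev, Matrix.transpose_nonsing_inv,
      Matrix.nonsing_inv_nonsing_inv _ hψ, Matrix.nonsing_inv_nonsing_inv, Matrix.mul_assoc]
    simpa using hψ
  have hψv : ψ.mulVec v = g := by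
    rw [hv, Matrix.mulVec_mulVec, Matrix.mul_nonsing_inv _ hψ, Matrix.one_mulVec]
  have hquadval : v ⬝ᵥ A⁻¹.mulVec v = g ⬝ᵥ Sg⁻¹.mulVec g := by
    rw [hAinv]
    have : (ψᵀ * Sg⁻¹ * ψ).mulVec v = ψᵀ.mulVec (Sg⁻¹.mulVec g) := by
      rw [← Matrix.mulVec_mulVec, hψv, ← Matrix.mulVec_mulVec]
    rw [this, Matrix.dotProduct_mulVec, Matrix.vecMul_transpose, hψv]
  have hdetval : A.det ^ (-(1 / 2) : ℝ) = |ψ.det| * Sg.det ^ (-(1 / 2) : ℝ) := by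
    have habs : 0 < |ψ.det| := abs_pos.mpr hdψ
    rw [hdetA]
    have : ψ.det⁻¹ * Sg.det * ψ.det⁻¹ = (|ψ.det| ^ (2:ℕ))⁻¹ * Sg.det := by
      rw [sq_abs]; ring
    have h2 : ((|ψ.det| ^ (2:ℕ))⁻¹ : ℝ) ^ (-(1/2) : ℝ) = |ψ.det| := by
      rw [← Real.rpow_natCast |ψ.det| 2, ← Real.rpow_neg habs.le, ← Real.rpow_mul habs.le]
      norm_num
    rw [this, Real.mul_rpow (by positivity) (le_of_lt hSd), h2]
  have : (fun l => ((Λ l).det ^ (-(1 / 2) : ℝ) *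
      Real.exp (-(1 / 2) * (u l ⬝ᵥ (Λ l)⁻¹.mulVec (u l))))) =
      (fun p : Matrix (Fin k) (Fin k) ℝ × (Fin k → ℝ) =>
        p.1.det ^ (-(1 / 2) : ℝ) * Real.exp (-(1 / 2) * (p.2 ⬝ᵥ (p.1)⁻¹.mulVec p.2)))
        ∘ (fun l => (Λ l, u l)) := rfl
  rw [this]
  have hval : A.det ^ (-(1 / 2) : ℝ) * Real.exp (-(1 / 2) * (v ⬝ᵥ A⁻¹.mulVec v)) =
      |ψ.det| * Sg.det ^ (-(1 / 2) : ℝ) * Real.exp (-(1 / 2) * (g ⬝ᵥ Sg⁻¹.mulVec g)) := by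
    rw [hquadval, hdetval]
  rw [← hval]
  exact Tmain
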